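/- Let 0 < ε ≤ 1/100, a₀ = (√5-1)/2, b₀ = (1+√5)/2, c₀ = 1, κ = 1/√5, and define g(a,b,c;x) = κ(a/(a²+x²) + b/(b²+x²)) - c/(c²+x²). If a,b,c are real numbers with |a-a₀| < 2ε, |b-b₀| < 2ε, |c-c₀| < 2ε, then for all real x one has -0.121586 - 5ε ≤ g(a,b,c;x) ≤ 5ε. -/

import Mathlib

lemma pert_bound (u u₀ x : ℝ) (hu : 0 < u) (hu0 : 0 < u₀) :
    |u / (u ^ 2 + x ^ 2) - u₀ / (u₀ ^ 2 + x ^ 2)| ≤ |u - u₀| / (u * u₀) := by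
  have h1 : 0 < u ^ 2 + x ^ 2 := by positivity
  have h2 : 0 < u₀ ^ 2 + x ^ 2 := by positivity
  have h3 : 0 < u * u₀ := by positivity
  have hd : u / (u ^ 2 + x ^ 2) - u₀ / (u₀ ^ 2 + x ^ 2)
      = (u - u₀) * (x ^ 2 - u * u₀) / ((u ^ 2 + x ^ 2) * (u₀ ^ 2 + x ^ 2)) := by
    field_simp
    ring
  rw [hd, abs_div, abs_mul, abs_of_pos (mul_pos h1 h2),
    div_le_div_iff₀ (mul_pos h1 h2) h3]
  have habs : |x ^ 2 - u * u₀| ≤ x ^ 2 + u * u₀ := by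
    rw [abs_le]; constructor <;> nlinarith [sq_nonneg x]
  have hmid : (x ^ 2 + u * u₀) * (u * u₀) ≤ (u ^ 2 + x ^ 2) * (u₀ ^ 2 + x ^ 2) := by
    nlinarith [sq_nonneg (x * (u - u₀)), sq_nonneg (u - u₀), sq_nonneg x]
  calc |u - u₀| * |x ^ 2 - u * u₀| * (u * u₀)
      ≤ |u - u₀| * ((x ^ 2 + u * u₀) * (u * u₀)) := by
        rw [mul_assoc]
        exact mul_le_mul_of_nonneg_left
          (mul_le_mul_of_nonneg_right habs h3.le) (abs_nonneg _)
    _ ≤ |u - u₀| * ((u ^ 2 + x ^ 2) * (u₀ ^ 2 + x ^ 2)) :=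
        mul_le_mul_of_nonneg_left hmid (abs_nonneg _)

lemma cubic_bound (t : ℝ) (ht : 0 ≤ t) :
    t ≤ 0.121586 * ((1 + 3 * t + t ^ 2) * (1 + t)) := by
  nlinarith [mul_nonneg ht (sq_nonneg (t - 0.451602)), sq_nonneg (t - 0.451602)]

lemma g0_bounds (s x : ℝ) (hs : s ^ 2 = 5) (hs0 : 0 < s) :
    -0.121586 ≤ 1 / s * (((s - 1) / 2) / (((s - 1) / 2) ^ 2 + x ^ 2)
        + ((1 + s) / 2) / (((1 + s) / 2) ^ 2 + x ^ 2)) - 1 / (1 + x ^ 2) ∧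
      1 / s * (((s - 1) / 2) / (((s - 1) / 2) ^ 2 + x ^ 2)
        + ((1 + s) / 2) / (((1 + s) / 2) ^ 2 + x ^ 2)) - 1 / (1 + x ^ 2) ≤ 0 := by
  set a₀ : ℝ := (s - 1) / 2 with ha₀def
  set b₀ : ℝ := (1 + s) / 2 with hb₀def
  have hs1 : 2.236 < s := by nlinarith
  have ha₀pos : 0 < a₀ := by rw [ha₀def]; linarith
  have hb₀pos : 0 < b₀ := by rw [hb₀def]; linarith
  have hA : 0 < a₀ ^ 2 + x ^ 2 := by positivity
  have hB : 0 < b₀ ^ 2 + x ^ 2 := by positivity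
  have hC : (0 : ℝ) < 1 + x ^ 2 := by positivity
  have hab : a₀ * b₀ = 1 := by
    rw [ha₀def, hb₀def]; linear_combination hs / 4
  have hsum : a₀ + b₀ = s := by rw [ha₀def, hb₀def]; ring
  have hN : a₀ * (b₀ ^ 2 + x ^ 2) + (a₀ ^ 2 + x ^ 2) * b₀ = s * (1 + x ^ 2) := by
    linear_combination (a₀ + b₀) * hab + (1 + x ^ 2) * hsum
  have hAB : (a₀ ^ 2 + x ^ 2) * (b₀ ^ 2 + x ^ 2) = 1 + 3 * x ^ 2 + x ^ 4 := by
    linear_combination (a₀ * b₀ + 1) * hab + x ^ 2 * (a₀ + b₀ + s) * hsum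
      + x ^ 2 * hs - 2 * x ^ 2 * hab
  have hD : (0 : ℝ) < 1 + 3 * x ^ 2 + x ^ 4 := by positivity
  have hmain : 1 / s * (a₀ / (a₀ ^ 2 + x ^ 2) + b₀ / (b₀ ^ 2 + x ^ 2)) - 1 / (1 + x ^ 2)
      = -(x ^ 2) / ((1 + 3 * x ^ 2 + x ^ 4) * (1 + x ^ 2)) := by
    rw [div_add_div _ _ hA.ne' hB.ne', hN, hAB]
    field_simp
    ring
  rw [hmain]
  constructor
  · rw [neg_div, neg_le_neg_iff.symm, neg_neg, div_le_iff₀ (by positivity)]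
    have := cubic_bound (x ^ 2) (sq_nonneg x)
    nlinarith [this]
  · have h0 : 0 ≤ x ^ 2 / ((1 + 3 * x ^ 2 + x ^ 4) * (1 + x ^ 2)) := by positivity
    rw [neg_div]
    linarith

lemma le_of_mul_le_aux (D p q r K : ℝ) (hD : 0 ≤ D) (h1 : D * p ≤ q)
    (hr : 0 < r) (hrp : r ≤ p) (hq : q ≤ r * K) : D ≤ K := by
  nlinarith [mul_nonneg hD (sub_nonneg.mpr hrp)]

theorem stmt_4 (ε a b c : ℝ) (hε : 0 < ε) (hε' : ε ≤ 1 / 100)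
    (ha : |a - (Real.sqrt 5 - 1) / 2| < 2 * ε)
    (hb : |b - (1 + Real.sqrt 5) / 2| < 2 * ε)
    (hc : |c - 1| < 2 * ε) (x : ℝ) :
    -0.121586 - 5 * ε ≤
        (1 / Real.sqrt 5) * (a / (a ^ 2 + x ^ 2) + b / (b ^ 2 + x ^ 2)) -
          c / (c ^ 2 + x ^ 2) ∧
      (1 / Real.sqrt 5) * (a / (a ^ 2 + x ^ 2) + b / (b ^ 2 + x ^ 2)) -
          c / (c ^ 2 + x ^ 2) ≤ 5 * ε := by
  set s : ℝ := Real.sqrt 5 with hsdef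
  have hs : s ^ 2 = 5 := Real.sq_sqrt (by norm_num)
  have hs0 : 0 < s := Real.sqrt_pos.mpr (by norm_num)
  have hs1 : 2.236 < s := by nlinarith
  set a₀ : ℝ := (s - 1) / 2 with ha₀def
  set b₀ : ℝ := (1 + s) / 2 with hb₀def
  have ha₀pos : 0 < a₀ := by rw [ha₀def]; linarith
  have hb₀pos : 0 < b₀ := by rw [hb₀def]; linarith
  have ha' := abs_lt.mp ha
  have hb' := abs_lt.mp hb
  have hc' := abs_lt.mp hc
  have hapos : 0 < a := by
    have : (0.598 : ℝ) < a := by rw [ha₀def] at ha'; linarith [ha'.1]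
    linarith
  have hbpos : 0 < b := by
    have : (1.598 : ℝ) < b := by rw [hb₀def] at hb'; linarith [hb'.1]
    linarith
  have hcpos : 0 < c := by
    have : (0.98 : ℝ) < c := by linarith [hc'.1]
    linarith
  have haa : (0.369 : ℝ) ≤ a * a₀ := by
    have h1 : (0.598 : ℝ) < a := by rw [ha₀def] at ha'; linarith [ha'.1]
    have h2 : (0.618 : ℝ) ≤ a₀ := by rw [ha₀def]; linarith
    nlinarith
  have hbb : (2.58 : ℝ) ≤ b * b₀ := by
    have h1 : (1.598 : ℝ) < b := by rw [hb₀def] at hb'; linarith [hb'.1]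
    have h2 : (1.618 : ℝ) ≤ b₀ := by rw [hb₀def]; linarith
    nlinarith
  have hcc : (0.98 : ℝ) ≤ c * 1 := by linarith [hc'.1]
  have hDa := pert_bound a a₀ x hapos ha₀pos
  have hDb := pert_bound b b₀ x hbpos hb₀pos
  have hDc := pert_bound c 1 x hcpos one_pos
  set Da := a / (a ^ 2 + x ^ 2) - a₀ / (a₀ ^ 2 + x ^ 2) with hDadef
  set Db := b / (b ^ 2 + x ^ 2) - b₀ / (b₀ ^ 2 + x ^ 2) with hDbdef
  set Dc := c / (c ^ 2 + x ^ 2) - 1 / (1 ^ 2 + x ^ 2) with hDcdef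
  have hDa2 : |Da| ≤ 5.43 * ε := by
    refine le_of_mul_le_aux _ (a * a₀) (|a - a₀|) 0.369 _ (abs_nonneg Da)
      ((le_div_iff₀ (by positivity)).mp hDa) (by norm_num) haa (by linarith only [ha, hε])
  have hDb2 : |Db| ≤ 0.776 * ε := by
    refine le_of_mul_le_aux _ (b * b₀) (|b - b₀|) 2.58 _ (abs_nonneg Db)
      ((le_div_iff₀ (by positivity)).mp hDb) (by norm_num) hbb (by linarith only [hb, hε])
  have hDc2 : |Dc| ≤ 2.05 * ε := by
    refine le_of_mul_le_aux _ (c * 1) (|c - 1|) 0.98 _ (abs_nonneg Dc)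
      ((le_div_iff₀ (by positivity)).mp hDc) (by norm_num) hcc (by linarith only [hc, hε])
  have hk : 1 / s < 0.4473 := by
    rw [div_lt_iff₀ hs0]; linarith
  have hk0 : 0 < 1 / s := by positivity
  have hka : |1 / s * Da| ≤ 0.4473 * (5.43 * ε) := by
    rw [abs_mul, abs_of_pos hk0]
    exact mul_le_mul hk.le hDa2 (abs_nonneg _) (by norm_num)
  have hkb : |1 / s * Db| ≤ 0.4473 * (0.776 * ε) := by
    rw [abs_mul, abs_of_pos hk0]
    exact mul_le_mul hk.le hDb2 (abs_nonneg _) (by norm_num)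
  have hka' := abs_le.mp hka
  have hkb' := abs_le.mp hkb
  have hDc'' := abs_le.mp hDc2
  have hg0 := g0_bounds s x hs hs0
  rw [← ha₀def, ← hb₀def] at hg0
  have hsplit : 1 / s * (a / (a ^ 2 + x ^ 2) + b / (b ^ 2 + x ^ 2)) - c / (c ^ 2 + x ^ 2)
      = (1 / s * (a₀ / (a₀ ^ 2 + x ^ 2) + b₀ / (b₀ ^ 2 + x ^ 2)) - 1 / (1 + x ^ 2))
        + 1 / s * Da + 1 / s * Db - Dc := by
    rw [hDadef, hDbdef, hDcdef]
    ring_nf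
  constructor
  · rw [hsplit]
    linarith only [hka'.1, hkb'.1, hDc''.2, hg0.1, hε]
  · rw [hsplit]
    linarith only [hka'.2, hkb'.2, hDc''.1, hg0.2, hε]
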